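/- Let E(f) ⊂ [0,1] be the set of endpoints of generation-1 cylinders of an interval map f as in the setup, and suppose there exists n ∈ ℕ such that the n-th iterated set of accumulation points Acc^n(E(f)) is empty. Then for any α ≤ 1/2, any β > 0, any k ∈ ℕ, and any starting interval, the player White in the (α,β)-game can in finitely many moves place his interval inside a single cylinder of generation k, thereby avoiding all endpoints of generation-k cylinders. -/

import Mathlib

/-- A closed interval given by its center `c` and radius `r > 0`. -/
structure SInt where
  c : ℝ
  r : ℝ
  rpos : 0 < r

/-- The closed interval determined by an `SInt`. -/
def SInt.set (I : SInt) : Set ℝ := Set.Icc (I.c - I.r) (I.c + I.r)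

/-- A legal move in Schmidt's game: `J ⊆ I` and `|J| = ρ |I|`. -/
def legalMove (ρ : ℝ) (J I : SInt) : Prop := J.set ⊆ I.set ∧ J.r = ρ * I.r

/-- `E` is `(α,β)`-winning for Schmidt's game on `[0,1]`: White has a (history-dependent)
strategy `ws` such that against every legal play `B` of Black (with `B 0 ⊆ [0,1]`), all of
White's moves are legal and any point lying in all of White's intervals belongs to `E`. -/
def IsWinningParam (α β : ℝ) (E : Set ℝ) : Prop :=
  ∃ ws : List SInt → SInt,
    ∀ B W : ℕ → SInt,
      (B 0).set ⊆ Set.Icc (0:ℝ) 1 →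
      (∀ n, W n = ws (List.ofFn fun i : Fin (n + 1) => B i.val)) →
      (∀ n, legalMove β (B (n + 1)) (W n)) →
      (∀ n, legalMove α (W n) (B n)) ∧ ∀ x : ℝ, (∀ n, x ∈ (W n).set) → x ∈ E

/-- `E` is `α`-winning if it is `(α,β)`-winning for every `β ∈ (0,1)`. -/
def IsWinning (α : ℝ) (E : Set ℝ) : Prop :=
  ∀ β : ℝ, 0 < β → β < 1 → IsWinningParam α β E

/-- In the `(α,β)`-game started from the interval `I`, White has a strategy guaranteeing
(playing legally) that after finitely many moves some interval `W j` satisfies the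
target predicate `T`. -/
def WhiteCanReach (α β : ℝ) (I : SInt) (T : Set ℝ → Prop) : Prop :=
  ∃ ws : List SInt → SInt,
    ∀ B W : ℕ → SInt,
      B 0 = I →
      (∀ n, W n = ws (List.ofFn fun i : Fin (n + 1) => B i.val)) →
      (∀ n, legalMove β (B (n + 1)) (W n)) →
      (∀ n, legalMove α (W n) (B n)) ∧ ∃ j, T (W j).set

/-- An expanding interval map as in the setup: `f` is defined on countably many disjoint
subintervals `[a i, b i)` of `[0,1)` whose lengths sum to `1`, is strictly monotone and
onto `[0,1)` on each piece, and expands distances on each piece. -/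
structure ExpandingSystem (ι : Type) where
  f : ℝ → ℝ
  a : ι → ℝ
  b : ι → ℝ
  hab : ∀ i, a i < b i
  hsub : ∀ i, Set.Ico (a i) (b i) ⊆ Set.Ico (0:ℝ) 1
  hdisj : Pairwise fun i j => Disjoint (Set.Ico (a i) (b i)) (Set.Ico (a j) (b j))
  hsum : ∑' i, (b i - a i) = 1
  hmono : ∀ i, StrictMonoOn f (Set.Ico (a i) (b i)) ∨ StrictAntiOn f (Set.Ico (a i) (b i))
  honto : ∀ i, f '' Set.Ico (a i) (b i) = Set.Ico (0:ℝ) 1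
  hexp : ∀ i, ∀ x ∈ Set.Ico (a i) (b i), ∀ y ∈ Set.Ico (a i) (b i), |x - y| ≤ |f x - f y|

/-- The generation-`n` cylinder `C_{w 0 … w (n-1)}` of an expanding system. -/
def ExpandingSystem.cyl {ι : Type} (S : ExpandingSystem ι) (w : ℕ → ι) (n : ℕ) : Set ℝ :=
  {x | ∀ k < n, S.f^[k] x ∈ Set.Ico (S.a (w k)) (S.b (w k))}

/-- Condition (i): there is `α₀ > 0` such that for each generation `k`, each starting
interval `I ⊆ [0,1]` and each `β ∈ (0,1)`, in the `(α₀,β)`-game White can in finitely many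
turns place his interval inside a single generation-`k` cylinder. -/
def CondI {ι : Type} (S : ExpandingSystem ι) (α₀ : ℝ) : Prop :=
  ∀ (k : ℕ) (I : SInt), I.set ⊆ Set.Icc (0:ℝ) 1 →
    ∀ β : ℝ, 0 < β → β < 1 →
      WhiteCanReach α₀ β I fun s => ∃ w : ℕ → ι, s ⊆ S.cyl w k

/-- Condition (ii): a uniform cylinder-ratio decay `|C_{x₁…x_{n+m}}| ≤ g(m) |C_{x₁…x_n}|`
with `g(m) → 0`. -/
def CondII {ι : Type} (S : ExpandingSystem ι) (g : ℕ → ℝ) : Prop :=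
  (∀ m, 0 ≤ g m) ∧ Filter.Tendsto g Filter.atTop (nhds 0) ∧
    ∀ (w : ℕ → ι) (n m : ℕ),
      MeasureTheory.volume (S.cyl w (n + m)) ≤
        ENNReal.ofReal (g m) * MeasureTheory.volume (S.cyl w n)

/-- `x` has a well-defined symbolic expansion: every iterate lies in some piece. -/
def HasExpansion {ι : Type} (S : ExpandingSystem ι) (x : ℝ) : Prop :=
  ∃ w : ℕ → ι, ∀ k : ℕ, S.f^[k] x ∈ Set.Ico (S.a (w k)) (S.b (w k))

/-- The set `G_f(x)` of points whose forward `f`-orbit closure avoids `x`. -/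
def Gset (f : ℝ → ℝ) (x : ℝ) : Set ℝ :=
  {y | y ∈ Set.Ico (0:ℝ) 1 ∧ x ∉ closure (Set.range fun n : ℕ => f^[n] y)}

/-- The set of accumulation points of `E`. -/
def AccSet (E : Set ℝ) : Set ℝ := {x | AccPt x (Filter.principal E)}
open Set

namespace SchmidtAux

noncomputable section

/-! ### List / history utilities -/

def dflt : SInt := ⟨0, 1, one_pos⟩

def lastI (L : List SInt) : SInt := L.getLast?.getD dflt

def histI (B : ℕ → SInt) (n : ℕ) : List SInt := List.ofFn fun i : Fin (n+1) => B i.val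

lemma length_histI (B : ℕ → SInt) (n : ℕ) : (histI B n).length = n + 1 := by
  simp [histI]

lemma getElem_histI (B : ℕ → SInt) (n i : ℕ) (h : i < (histI B n).length) :
    (histI B n)[i] = B i := by
  have h' : i < n + 1 := by simpa [length_histI] using h
  simp only [histI]
  rw [List.getElem_ofFn]

lemma lastI_eq_getElem (L : List SInt) (h : L ≠ []) :
    lastI L = L[L.length - 1]'(by have := List.length_pos_iff.mpr h; omega) := by
  rw [lastI, List.getLast?_eq_getElem?,
    List.getElem?_eq_getElem (by have := List.length_pos_iff.mpr h; omega)]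
  rfl

lemma histI_ne_nil (B : ℕ → SInt) (n : ℕ) : histI B n ≠ [] := by
  intro h
  have := length_histI B n
  rw [h] at this
  simp at this

lemma lastI_histI (B : ℕ → SInt) (n : ℕ) : lastI (histI B n) = B n := by
  rw [lastI_eq_getElem _ (histI_ne_nil B n), getElem_histI]
  congr 1
  rw [length_histI]
  omega

lemma lastI_drop (L : List SInt) (k : ℕ) (hk : k < L.length) :
    lastI (L.drop k) = lastI L := by
  have hne : L.drop k ≠ [] := by
    intro h
    have h2 := congrArg List.length h
    simp only [List.length_drop, List.length_nil] at h2
    omega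
  have hne' : L ≠ [] := by intro h; rw [h] at hk; simp at hk
  rw [lastI_eq_getElem _ hne, lastI_eq_getElem _ hne']
  have hlen : (L.drop k).length = L.length - k := by simp
  have h1 : (L.drop k)[(L.drop k).length - 1]'(by have := List.length_pos_iff.mpr hne; omega)
      = L[k + ((L.drop k).length - 1)]'(by omega) := List.getElem_drop
  rw [h1]
  congr 1
  omega

lemma take_histI (B : ℕ → SInt) (n m : ℕ) (h : m ≤ n) :
    (histI B n).take (m+1) = histI B m := by
  apply List.ext_getElem
  · simp [length_histI]; omega
  · intro i h1 h2
    rw [List.getElem_take, getElem_histI, getElem_histI]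

lemma drop_histI (B : ℕ → SInt) (n j : ℕ) (h : j < n) :
    (histI B n).drop (j+1) = histI (fun m => B (j+1+m)) (n - (j+1)) := by
  apply List.ext_getElem
  · simp [length_histI]; omega
  · intro i h1 h2
    have h3 : j + 1 + i < (histI B n).length := by
      simp only [List.length_drop, length_histI] at h1 ⊢; omega
    rw [List.getElem_drop, getElem_histI, getElem_histI]

/-! ### Strategies -/

def Good (α : ℝ) (ws : List SInt → SInt) : Prop := ∀ L, legalMove α (ws L) (lastI L)

/-- Strengthened version of `WhiteCanReach`: the strategy is unconditionally legal. -/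
def Reaches (α β : ℝ) (I : SInt) (T : Set ℝ → Prop) : Prop :=
  ∃ ws : List SInt → SInt, Good α ws ∧
    ∀ B W : ℕ → SInt, B 0 = I →
      (∀ n, W n = ws (histI B n)) →
      (∀ n, legalMove β (B (n + 1)) (W n)) →
      ∃ j, T (W j).set

variable {α β : ℝ} {I : SInt} {T T' T₁ T₂ : Set ℝ → Prop}

lemma Reaches.whiteCanReach (h : Reaches α β I T) : WhiteCanReach α β I T := by
  obtain ⟨ws, hg, hp⟩ := h
  refine ⟨ws, fun B W h0 hW hB => ⟨fun n => ?_, hp B W h0 hW hB⟩⟩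
  have := hg (histI B n)
  rw [lastI_histI] at this
  rw [hW n]
  exact this

lemma play_nested (ws : List SInt → SInt) (hg : Good α ws) (B W : ℕ → SInt)
    (hW : ∀ n, W n = ws (histI B n)) (hB : ∀ n, legalMove β (B (n+1)) (W n)) :
    ∀ j, (W j).set ⊆ (B 0).set := by
  intro j; induction j with
  | zero =>
    rw [hW 0]
    have := hg (histI B 0); rw [lastI_histI] at this; exact this.1
  | succ n ih =>
    have h1 : (W (n+1)).set ⊆ (B (n+1)).set := by
      rw [hW (n+1)]
      have := hg (histI B (n+1)); rw [lastI_histI] at this; exact this.1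
    exact h1.trans ((hB n).1.trans ih)

lemma Reaches.mono (h : Reaches α β I T)
    (h2 : ∀ X : SInt, X.set ⊆ I.set → T X.set → T' X.set) : Reaches α β I T' := by
  obtain ⟨ws, hg, hp⟩ := h
  refine ⟨ws, hg, fun B W h0 hW hB => ?_⟩
  obtain ⟨j, hj⟩ := hp B W h0 hW hB
  exact ⟨j, h2 (W j) (h0 ▸ play_nested ws hg B W hW hB j) hj⟩

def centerWS (α : ℝ) (hα0 : 0 < α) : List SInt → SInt :=
  fun L => ⟨(lastI L).c, α * (lastI L).r, mul_pos hα0 (lastI L).rpos⟩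

lemma good_centerWS (hα0 : 0 < α) (hα1 : α ≤ 1) : Good α (centerWS α hα0) := by
  intro L
  have hr := (lastI L).rpos
  refine ⟨?_, rfl⟩
  simp only [SInt.set, centerWS]
  exact Icc_subset_Icc (by nlinarith) (by nlinarith)

lemma reaches_of_forall (hα0 : 0 < α) (hα1 : α ≤ 1)
    (h : ∀ X : SInt, X.set ⊆ I.set → T X.set) : Reaches α β I T := by
  refine ⟨centerWS α hα0, good_centerWS hα0 hα1, fun B W h0 hW hB => ⟨0, h (W 0) ?_⟩⟩
  exact h0 ▸ play_nested _ (good_centerWS hα0 hα1) B W hW hB 0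

end

end SchmidtAux
namespace SchmidtAux

open Set

variable {α β : ℝ} {I : SInt} {T T' T₁ T₂ : Set ℝ → Prop}

/-- Composition of plans: first reach `T₁`, then from any Black interval inside a
`T₁`-interval, reach `T₂`. -/
lemma Reaches.comp (hα0 : 0 < α) (hα1 : α ≤ 1)
    (h1 : Reaches α β I T₁)
    (h2 : ∀ J : SInt, J.set ⊆ I.set → (∃ X : SInt, T₁ X.set ∧ J.set ⊆ X.set) →
      Reaches α β J T₂) :
    Reaches α β I T₂ := by
  classical
  obtain ⟨ws1, hg1, hp1⟩ := h1
  set R : SInt → Prop := fun J => J.set ⊆ I.set ∧ ∃ X : SInt, T₁ X.set ∧ J.set ⊆ X.set with hR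
  let ws2 : SInt → List SInt → SInt := fun J =>
    if h : R J then (h2 J h.1 h.2).choose else centerWS α hα0
  have hg2 : ∀ J, Good α (ws2 J) := by
    intro J
    by_cases h : R J
    · simp only [ws2, dif_pos h]; exact (h2 J h.1 h.2).choose_spec.1
    · simp only [ws2, dif_neg h]; exact good_centerWS hα0 hα1
  set C : List SInt → Prop := fun L => ∃ j, j < L.length ∧ T₁ ((ws1 (L.take (j+1))).set)
    with hC
  set wsC : List SInt → SInt := fun L =>
    if h : C L then
      (if h' : L.length ≤ Nat.find h + 1 then ws1 L
       else ws2 (L[Nat.find h + 1]'(by omega)) (L.drop (Nat.find h + 1)))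
    else ws1 L with hwsC
  have hgC : Good α wsC := by
    intro L
    simp only [hwsC]
    by_cases h : C L
    · rw [dif_pos h]
      by_cases h' : L.length ≤ Nat.find h + 1
      · rw [dif_pos h']; exact hg1 L
      · rw [dif_neg h']
        have hlt : Nat.find h + 1 < L.length := by omega
        have := hg2 (L[Nat.find h + 1]'(by omega)) (L.drop (Nat.find h + 1))
        rwa [lastI_drop _ _ hlt] at this
    · rw [dif_neg h]; exact hg1 L
  refine ⟨wsC, hgC, ?_⟩
  intro B W h0 hW hB
  set P : ℕ → Prop := fun j => T₁ ((ws1 (histI B j)).set) with hP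
  by_cases hex : ∃ j, P j
  · -- there is a first stage-1 success
    set j₀ := Nat.find hex with hj₀
    have hPj₀ : P j₀ := Nat.find_spec hex
    have hmin : ∀ m, m < j₀ → ¬ P m := fun m hm => Nat.find_min hex hm
    -- the strategy condition for history of length n+1
    have hcond : ∀ n, j₀ ≤ n → C (histI B n) := by
      intro n hn
      exact ⟨j₀, by rw [length_histI]; omega,
        by rw [take_histI B n j₀ hn]; exact hPj₀⟩
    have hncond : ∀ n, n < j₀ → ¬ C (histI B n) := by
      intro n hn hc
      obtain ⟨j, hjl, hj⟩ := hc
      rw [length_histI] at hjl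
      rw [take_histI B n j (by omega)] at hj
      exact hmin j (by omega) hj
    have hfind : ∀ n, (hn : j₀ ≤ n) → Nat.find (hcond n hn) = j₀ := by
      intro n hn
      rw [Nat.find_eq_iff]
      constructor
      · exact ⟨by rw [length_histI]; omega, by rw [take_histI B n j₀ hn]; exact hPj₀⟩
      · intro k hk hkc
        obtain ⟨hkl, hkT⟩ := hkc
        rw [length_histI] at hkl
        rw [take_histI B n k (by omega)] at hkT
        exact hmin k hk hkT
    have hWle : ∀ n, n ≤ j₀ → W n = ws1 (histI B n) := by
      intro n hn
      rcases lt_or_eq_of_le hn with hlt | heq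
      · rw [hW n]; simp only [hwsC]; rw [dif_neg (hncond n hlt)]
      · have hn' : j₀ ≤ n := le_of_eq heq.symm
        rw [hW n]; simp only [hwsC]; rw [dif_pos (hcond n hn')]
        rw [dif_pos (by rw [hfind n hn', length_histI]; omega)]
    set J : SInt := B (j₀ + 1) with hJdef
    have hWgt : ∀ n, j₀ < n → W n = ws2 J ((histI B n).drop (j₀+1)) := by
      intro n hn
      rw [hW n]; simp only [hwsC]
      rw [dif_pos (hcond n (le_of_lt hn))]
      have hf := hfind n (le_of_lt hn)
      rw [dif_neg (by rw [hf, length_histI]; omega)]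
      simp only [hf]
      rw [getElem_histI B n (j₀+1) (by rw [length_histI]; omega)]
    -- facts about J
    have hT₁W : T₁ (W j₀).set := by rw [hWle j₀ le_rfl]; exact hPj₀
    have hJW : J.set ⊆ (W j₀).set := (hB j₀).1
    have hJI : J.set ⊆ I.set := by
      refine hJW.trans ?_
      have hpn := play_nested wsC hgC B W hW hB j₀
      rwa [h0] at hpn
    have hRJ : R J := ⟨hJI, ⟨W j₀, hT₁W, hJW⟩⟩
    have hws2J : ws2 J = (h2 J hRJ.1 hRJ.2).choose := by simp only [ws2, dif_pos hRJ]
    obtain ⟨hgs2, hps2⟩ := (h2 J hRJ.1 hRJ.2).choose_spec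
    -- stage-2 play
    set B' : ℕ → SInt := fun m => B (j₀ + 1 + m) with hB'
    set W' : ℕ → SInt := fun m => W (j₀ + 1 + m) with hW'
    have hstage : ∀ m, W' m = (h2 J hRJ.1 hRJ.2).choose (histI B' m) := by
      intro m
      have h1' : j₀ < j₀ + 1 + m := by omega
      have := hWgt (j₀ + 1 + m) h1'
      rw [drop_histI B (j₀+1+m) j₀ (by omega)] at this
      have harith : j₀ + 1 + m - (j₀ + 1) = m := by omega
      rw [harith] at this
      rw [hW', ← hws2J]
      exact this
    have hB'leg : ∀ m, legalMove β (B' (m+1)) (W' m) := by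
      intro m
      have : j₀ + 1 + (m + 1) = (j₀ + 1 + m) + 1 := by omega
      simp only [hB', hW', this]
      exact hB (j₀ + 1 + m)
    obtain ⟨m, hm⟩ := hps2 B' W' rfl hstage hB'leg
    exact ⟨j₀ + 1 + m, hm⟩
  · -- no success: the play is a pure ws1-play, contradiction
    push_neg at hex
    have hWn : ∀ n, W n = ws1 (histI B n) := by
      intro n
      rw [hW n]; simp only [hwsC]
      rw [dif_neg]
      intro hc
      obtain ⟨j, hjl, hj⟩ := hc
      rw [length_histI] at hjl
      rw [take_histI B n j (by omega)] at hj
      exact hex j hj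
    obtain ⟨j, hj⟩ := hp1 B W h0 hWn hB
    rw [hWn j] at hj
    exact absurd hj (hex j)

end SchmidtAux
namespace SchmidtAux

open Set

variable {α β : ℝ} {I : SInt} {T T' T₁ T₂ : Set ℝ → Prop}

/-- White can avoid a single point in at most two moves. -/
lemma reaches_avoidPoint (hα0 : 0 < α) (hα : α ≤ 1/2) (p : ℝ) (I : SInt) :
    Reaches α β I (fun s => p ∉ s) := by
  refine ⟨fun L =>
    if p ≤ (lastI L).c
    then ⟨(lastI L).c + (lastI L).r - α * (lastI L).r, α * (lastI L).r,
      mul_pos hα0 (lastI L).rpos⟩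
    else ⟨(lastI L).c - (lastI L).r + α * (lastI L).r, α * (lastI L).r,
      mul_pos hα0 (lastI L).rpos⟩, ?_, ?_⟩
  · intro L
    have hr := (lastI L).rpos
    dsimp only
    split <;> exact ⟨by
      simp only [SInt.set]
      exact Icc_subset_Icc (by nlinarith) (by nlinarith), rfl⟩
  · intro B W h0 hW hB
    have hW0 : W 0 = if p ≤ (B 0).c
      then ⟨(B 0).c + (B 0).r - α * (B 0).r, α * (B 0).r, mul_pos hα0 (B 0).rpos⟩
      else ⟨(B 0).c - (B 0).r + α * (B 0).r, α * (B 0).r, mul_pos hα0 (B 0).rpos⟩ := by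
      rw [hW 0]
      simp only [lastI_histI]
    have hW1 : W 1 = if p ≤ (B 1).c
      then ⟨(B 1).c + (B 1).r - α * (B 1).r, α * (B 1).r, mul_pos hα0 (B 1).rpos⟩
      else ⟨(B 1).c - (B 1).r + α * (B 1).r, α * (B 1).r, mul_pos hα0 (B 1).rpos⟩ := by
      rw [hW 1]
      simp only [lastI_histI]
    have hr0 := (B 0).rpos
    have hr1 := (B 1).rpos
    by_cases hc : p ∉ (W 0).set
    · exact ⟨0, hc⟩
    push_neg at hc
    refine ⟨1, ?_⟩
    by_cases hp0 : p ≤ (B 0).c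
    · -- right half was taken; p must be at the left edge
      rw [hW0, if_pos hp0] at hc
      simp only [SInt.set, Set.mem_Icc] at hc
      -- p ≥ B0.c + B0.r - 2 α B0.r and p ≤ B0.c
      have hedge : (B 0).c + (B 0).r - α * (B 0).r - α * (B 0).r ≥ p := by nlinarith
      -- Black's next interval lies in the right half, so its center is > p
      have hBsub := (hB 0).1
      rw [hW0, if_pos hp0] at hBsub
      have hmem : (B 1).c - (B 1).r ∈ (B 1).set := by
        simp only [SInt.set, Set.mem_Icc]; constructor <;> linarith
      have hlow := hBsub hmem
      simp only [SInt.set, Set.mem_Icc] at hlow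
      have hpc1 : p < (B 1).c := by linarith [hc.1]
      rw [hW1, if_pos (le_of_lt hpc1)]
      simp only [SInt.set, Set.mem_Icc]
      intro hmem2
      nlinarith [hmem2.1]
    · -- left half was taken; p cannot be in it at all
      exfalso
      rw [hW0, if_neg hp0] at hc
      simp only [SInt.set, Set.mem_Icc] at hc
      push_neg at hp0
      nlinarith [hc.2]

/-- White can avoid any finite set. -/
lemma reaches_avoidFinite (hα0 : 0 < α) (hα : α ≤ 1/2) {F : Set ℝ} (hF : F.Finite) :
    ∀ I : SInt, Reaches α β I (fun s => s ∩ F = ∅) := by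
  have hα1 : α ≤ 1 := by linarith
  refine Set.Finite.induction_on
    (motive := fun F _ => ∀ I : SInt, Reaches α β I (fun s => s ∩ F = ∅)) F hF ?_ ?_
  · intro I
    exact reaches_of_forall hα0 hα1 (fun X _ => by simp)
  · intro p F hp hFfin ih I
    refine Reaches.comp hα0 hα1 (reaches_avoidPoint hα0 hα p I) ?_
    rintro J hJI ⟨X, hX, hJX⟩
    have hpJ : p ∉ J.set := fun h => hX (hJX h)
    refine (ih J).mono ?_
    intro Y hYJ hYF
    rw [Set.inter_insert_of_notMem (fun h => hpJ (hYJ h))]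
    exact hYF

/-- Bolzano–Weierstrass style: a subset of a bounded interval meeting no accumulation
point of itself is finite. -/
lemma finite_of_no_accPt {F K : Set ℝ} (hK : IsCompact K) (hFK : F ⊆ K)
    (h : ∀ x ∈ K, ¬ AccPt x (Filter.principal F)) : F.Finite := by
  by_contra hinf
  have hFinf : F.Infinite := hinf
  obtain ⟨x, hxK, hacc⟩ := hFinf.exists_accPt_of_subset_isCompact hK hFK
  exact h x hxK hacc

/-- Core avoidance lemma: White can avoid any set whose iterated accumulation sets
eventually vanish. -/
lemma reaches_avoidRank (hα0 : 0 < α) (hα : α ≤ 1/2) :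
    ∀ (m : ℕ) (F : Set ℝ), AccSet^[m] F = ∅ → ∀ I : SInt,
      Reaches α β I (fun s => s ∩ F = ∅) := by
  have hα1 : α ≤ 1 := by linarith
  intro m
  induction m with
  | zero =>
    intro F hF I
    simp only [Function.iterate_zero, id] at hF
    subst hF
    exact reaches_of_forall hα0 hα1 (fun X _ => by simp)
  | succ m ih =>
    intro F hF I
    have hFacc : AccSet^[m] (AccSet F) = ∅ := by
      rw [← Function.iterate_succ_apply]
      exact hF
    refine Reaches.comp hα0 hα1 (ih (AccSet F) hFacc I) ?_
    rintro J hJI ⟨X, hX, hJX⟩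
    -- F ∩ J.set is finite
    have hfin : (F ∩ J.set).Finite := by
      refine finite_of_no_accPt (isCompact_Icc (a := J.c - J.r) (b := J.c + J.r))
        (Set.inter_subset_right) ?_
      intro x hxJ hacc
      have hxAcc : x ∈ AccSet F :=
        hacc.mono (Filter.principal_mono.mpr Set.inter_subset_left)
      have hxX : x ∈ X.set := hJX hxJ
      have : x ∈ X.set ∩ AccSet F := ⟨hxX, hxAcc⟩
      rw [hX] at this
      exact this.elim
    refine (reaches_avoidFinite hα0 hα hfin J).mono ?_
    intro Y hYJ hY
    rw [Set.eq_empty_iff_forall_notMem]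
    rintro x ⟨hxY, hxF⟩
    have hx : x ∈ Y.set ∩ (F ∩ J.set) := ⟨hxY, hxF, hYJ hxY⟩
    rw [hY] at hx
    exact hx

end SchmidtAux
namespace SchmidtAux

open Set MeasureTheory

/-! ### AccSet lemmas -/

lemma accSet_eq_derivedSet (E : Set ℝ) : AccSet E = derivedSet E := rfl

lemma accSet_mono {A B : Set ℝ} (h : A ⊆ B) : AccSet A ⊆ AccSet B :=
  derivedSet_mono A B h

lemma accSet_union (A B : Set ℝ) : AccSet (A ∪ B) = AccSet A ∪ AccSet B :=
  derivedSet_union A B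

lemma accSet_accSet (E : Set ℝ) : AccSet (AccSet E) ⊆ AccSet E :=
  (isClosed_iff_derivedSet_subset _).mp (isClosed_derivedSet E)

lemma accSet_finite {F : Set ℝ} (h : F.Finite) : AccSet F = ∅ := by
  rw [Set.eq_empty_iff_forall_notMem]
  intro x hx
  rw [AccSet, Set.mem_setOf_eq, accPt_iff_nhds] at hx
  have hcl : IsClosed (F \ {x}) := (h.subset (Set.diff_subset)).isClosed
  have hU : (F \ {x})ᶜ ∈ nhds x := hcl.isOpen_compl.mem_nhds (fun hc => hc.2 rfl)
  obtain ⟨y, ⟨hyU, hyF⟩, hyx⟩ := hx _ hU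
  exact hyU ⟨hyF, hyx⟩

lemma accSet_iterate_mono {A B : Set ℝ} (h : A ⊆ B) (m : ℕ) :
    AccSet^[m] A ⊆ AccSet^[m] B := by
  induction m with
  | zero => simpa using h
  | succ m ih =>
    rw [Function.iterate_succ_apply', Function.iterate_succ_apply']
    exact accSet_mono ih

lemma accSet_iterate_union (A B : Set ℝ) (m : ℕ) :
    AccSet^[m] (A ∪ B) ⊆ AccSet^[m] A ∪ AccSet^[m] B := by
  induction m with
  | zero => simp
  | succ m ih =>
    rw [Function.iterate_succ_apply', Function.iterate_succ_apply',
      Function.iterate_succ_apply']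
    refine (accSet_mono ih).trans ?_
    rw [accSet_union]

/-! ### The generation-1 bad set -/

set_option linter.unusedSectionVars false

variable {ι : Type} [Countable ι] (S : ExpandingSystem ι)

/-- The set of endpoints of pieces. -/
def Ept : Set ℝ := Set.range S.a ∪ Set.range S.b

/-- The generation-1 bad set. -/
def D1 : Set ℝ := Set.Icc 0 1 \ ⋃ i, Set.Ioo (S.a i) (S.b i)

lemma a_nonneg (i : ι) : 0 ≤ S.a i := (S.hsub i ⟨le_rfl, S.hab i⟩).1

lemma b_le_one (i : ι) : S.b i ≤ 1 := by
  by_contra h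
  push_neg at h
  have : max (S.a i) 1 ∈ Set.Ico (S.a i) (S.b i) := ⟨le_max_left _ _, max_lt (S.hab i) h⟩
  have := (S.hsub i this).2
  have := le_max_right (S.a i) 1
  linarith

lemma b_mem_D1 (i : ι) : S.b i ∈ D1 S := by
  constructor
  · exact ⟨le_of_lt (lt_of_le_of_lt (a_nonneg S i) (S.hab i)), b_le_one S i⟩
  · intro h
    obtain ⟨i', hi'⟩ := Set.mem_iUnion.mp h
    rcases eq_or_ne i' i with rfl | hne
    · exact lt_irrefl _ hi'.2
    · have hm1 : max (S.a i) (S.a i') ∈ Set.Ico (S.a i) (S.b i) :=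
        ⟨le_max_left _ _, max_lt (S.hab i) hi'.1⟩
      have hm2 : max (S.a i) (S.a i') ∈ Set.Ico (S.a i') (S.b i') :=
        ⟨le_max_right _ _, max_lt (lt_trans (S.hab i) hi'.2) (lt_trans hi'.1 hi'.2)⟩
      exact Set.disjoint_left.mp (S.hdisj hne) hm2 hm1

lemma summable_lengths : Summable (fun i => S.b i - S.a i) := by
  by_contra h
  have := tsum_eq_zero_of_not_summable h
  rw [S.hsum] at this
  norm_num at this

lemma volume_union_pieces : volume (⋃ i, Set.Ico (S.a i) (S.b i)) = 1 := by
  rw [measure_iUnion S.hdisj (fun i => measurableSet_Ico)]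
  simp only [Real.volume_Ico]
  rw [← ENNReal.ofReal_tsum_of_nonneg (fun i => by linarith [S.hab i]) (summable_lengths S),
    S.hsum, ENNReal.ofReal_one]

lemma D1_subset_closure : D1 S ⊆ (Ept S ∪ AccSet (Ept S)) ∪ {0, 1} := by
  intro x hx
  obtain ⟨⟨hx0, hx1⟩, hxU⟩ := hx
  by_cases hxE : x ∈ Ept S
  · exact Or.inl (Or.inl hxE)
  by_cases hx01 : x = 0 ∨ x = 1
  · rcases hx01 with rfl | rfl
    · exact Or.inr (Or.inl rfl)
    · exact Or.inr (Or.inr rfl)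
  push_neg at hx01
  refine Or.inl (Or.inr ?_)
  rw [AccSet, Set.mem_setOf_eq, accPt_iff_nhds]
  intro U hU
  obtain ⟨ε, hε, hball⟩ := Metric.mem_nhds_iff.mp hU
  by_contra hno
  push_neg at hno
  have hx0' : 0 < x := lt_of_le_of_ne hx0 (Ne.symm hx01.1)
  have hx1' : x < 1 := lt_of_le_of_ne hx1 hx01.2
  set ε' := min ε (min x (1 - x)) with hε'
  have hε'pos : 0 < ε' := lt_min hε (lt_min hx0' (by linarith))
  have hε'x : ε' ≤ x := le_trans (min_le_right _ _) (min_le_left _ _)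
  have hε'1x : ε' ≤ 1 - x := le_trans (min_le_right _ _) (min_le_right _ _)
  have hε'ε : ε' ≤ ε := min_le_left _ _
  -- every endpoint is at distance ≥ ε' from x
  have hEfar : ∀ y ∈ Ept S, ¬ (|y - x| < ε') := by
    intro y hy hlt
    have hyU : y ∈ U := hball (by
      rw [Metric.mem_ball, Real.dist_eq]
      exact lt_of_lt_of_le hlt hε'ε)
    have := hno y ⟨hyU, hy⟩
    rw [this] at hy
    exact hxE hy
  -- hence every piece misses the ε'-interval around x
  have hdisjJ : ∀ i, Set.Ico (S.a i) (S.b i) ∩ Set.Ioo (x - ε') (x + ε') = ∅ := by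
    intro i
    rw [Set.eq_empty_iff_forall_notMem]
    rintro y ⟨⟨hya, hyb⟩, hy1, hy2⟩
    have hafar := hEfar (S.a i) (Or.inl ⟨i, rfl⟩)
    have hbfar := hEfar (S.b i) (Or.inr ⟨i, rfl⟩)
    rw [not_lt, le_abs] at hafar hbfar
    have ha' : S.a i ≤ x - ε' := by
      rcases hafar with h | h
      · linarith
      · linarith
    have hb' : x + ε' ≤ S.b i := by
      rcases hbfar with h | h
      · linarith
      · linarith
    exact hxU (Set.mem_iUnion.mpr ⟨i, by constructor <;> linarith⟩)
  -- measure contradiction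
  have hsub2 : (⋃ i, Set.Ico (S.a i) (S.b i)) ⊆
      Set.Ico (0:ℝ) 1 \ Set.Ioo (x - ε') (x + ε') := by
    refine Set.iUnion_subset fun i => Set.subset_diff.mpr ⟨S.hsub i, ?_⟩
    rw [Set.disjoint_iff_inter_eq_empty]
    exact hdisjJ i
  have hm : (1:ENNReal) ≤ volume (Set.Ico (0:ℝ) 1 \ Set.Ioo (x - ε') (x + ε')) := by
    rw [← volume_union_pieces S]
    exact measure_mono hsub2
  have hIoosub : Set.Ioo (x - ε') (x + ε') ⊆ Set.Ico (0:ℝ) 1 := by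
    intro y hy
    constructor
    · linarith [hy.1]
    · linarith [hy.2]
  rw [measure_diff hIoosub measurableSet_Ioo.nullMeasurableSet (by simp)] at hm
  rw [Real.volume_Ico, Real.volume_Ioo] at hm
  have h2ε : (0:ℝ) < x + ε' - (x - ε') := by linarith
  have hlt : ENNReal.ofReal (1 - 0) - ENNReal.ofReal (x + ε' - (x - ε'))
      < ENNReal.ofReal (1 - 0) := by
    refine ENNReal.sub_lt_self (by simp) (by norm_num) ?_
    exact (ENNReal.ofReal_pos.mpr h2ε).ne'
  rw [show (1:ℝ) - 0 = 1 by norm_num, ENNReal.ofReal_one] at hm hlt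
  exact absurd (lt_of_le_of_lt hm hlt) (lt_irrefl _)

lemma accSet_D1_subset : AccSet (D1 S) ⊆ AccSet (Ept S) := by
  refine (accSet_mono (D1_subset_closure S)).trans ?_
  rw [accSet_union, accSet_union]
  have h01 : AccSet ({0, 1} : Set ℝ) = ∅ :=
    accSet_finite (Set.Finite.insert 0 (Set.finite_singleton 1))
  rw [h01]
  refine Set.union_subset (Set.union_subset subset_rfl (accSet_accSet _)) ?_
  simp

lemma D1_rank {n : ℕ} (hn : 1 ≤ n) (hacc : AccSet^[n] (Ept S) = ∅) :
    AccSet^[n] (D1 S) = ∅ := by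
  obtain ⟨m, rfl⟩ : ∃ m, n = m + 1 := ⟨n - 1, by omega⟩
  rw [Set.eq_empty_iff_forall_notMem]
  intro x hx
  rw [Function.iterate_succ_apply] at hx hacc
  have := accSet_iterate_mono (accSet_D1_subset S) m hx
  rw [hacc] at this
  exact this

end SchmidtAux
namespace SchmidtAux

open Set

set_option linter.unusedSectionVars false

variable {ι : Type} [Countable ι] (S : ExpandingSystem ι)

/-! ### Cylinder lemmas -/

lemma cyl_zero (w : ℕ → ι) : S.cyl w 0 = Set.univ := by
  ext x; simp [ExpandingSystem.cyl]

lemma mem_cyl_succ {w : ℕ → ι} {k : ℕ} {x : ℝ} :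
    x ∈ S.cyl w (k+1) ↔ x ∈ Set.Ico (S.a (w 0)) (S.b (w 0)) ∧
      S.f x ∈ S.cyl (fun j => w (j+1)) k := by
  constructor
  · intro h
    refine ⟨by simpa using h 0 (Nat.succ_pos k), fun j hj => ?_⟩
    have := h (j+1) (by omega)
    rwa [Function.iterate_succ_apply] at this
  · rintro ⟨h0, h1⟩ j hj
    cases j with
    | zero => simpa using h0
    | succ j => rw [Function.iterate_succ_apply]; exact h1 j (by omega)

lemma cyl_one (w : ℕ → ι) : S.cyl w 1 = Set.Ico (S.a (w 0)) (S.b (w 0)) := by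
  ext x
  constructor
  · intro h; simpa using h 0 one_pos
  · intro h j hj
    have : j = 0 := by omega
    subst this; simpa using h

lemma cyl_subset_piece (w : ℕ → ι) (k : ℕ) (hk : 1 ≤ k) :
    S.cyl w k ⊆ Set.Ico (S.a (w 0)) (S.b (w 0)) := by
  intro x hx
  simpa using hx 0 hk

lemma cyl_ordConnected : ∀ (k : ℕ) (w : ℕ → ι), Set.OrdConnected (S.cyl w k) := by
  intro k
  induction k with
  | zero =>
    intro w; rw [cyl_zero]; exact ordConnected_univ
  | succ k ih =>
    intro w
    constructor
    intro x hx y hy z hz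
    rw [mem_cyl_succ] at hx hy
    rw [show (z ∈ S.cyl w (k+1)) = (z ∈ S.cyl w (k+1)) from rfl, mem_cyl_succ]
    have hzp : z ∈ Set.Ico (S.a (w 0)) (S.b (w 0)) :=
      (Set.ordConnected_Ico).out hx.1 hy.1 hz
    refine ⟨hzp, ?_⟩
    rcases S.hmono (w 0) with hm | hm
    · have h1 : S.f x ≤ S.f z := hm.monotoneOn hx.1 hzp hz.1
      have h2 : S.f z ≤ S.f y := hm.monotoneOn hzp hy.1 hz.2
      exact (ih (fun j => w (j+1))).out hx.2 hy.2 ⟨h1, h2⟩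
    · have h1 : S.f y ≤ S.f z := hm.antitoneOn hzp hy.1 hz.2
      have h2 : S.f z ≤ S.f x := hm.antitoneOn hx.1 hzp hz.1
      exact (ih (fun j => w (j+1))).out hy.2 hx.2 ⟨h1, h2⟩

lemma iter_monoanti : ∀ (k : ℕ) (w : ℕ → ι),
    StrictMonoOn (S.f^[k]) (S.cyl w k) ∨ StrictAntiOn (S.f^[k]) (S.cyl w k) := by
  intro k
  induction k with
  | zero =>
    intro w; left; intro x _ y _ h; simpa using h
  | succ k ih =>
    intro w
    have hmaps : ∀ x ∈ S.cyl w (k+1), S.f x ∈ S.cyl (fun j => w (j+1)) k :=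
      fun x hx => (mem_cyl_succ S |>.mp hx).2
    have hpiece : S.cyl w (k+1) ⊆ Set.Ico (S.a (w 0)) (S.b (w 0)) :=
      cyl_subset_piece S w (k+1) (by omega)
    rcases S.hmono (w 0) with hf | hf <;> rcases ih (fun j => w (j+1)) with hg | hg
    · left; intro x hx y hy hxy
      simp only [Function.iterate_succ_apply]
      exact hg (hmaps x hx) (hmaps y hy) (hf (hpiece hx) (hpiece hy) hxy)
    · right; intro x hx y hy hxy
      simp only [Function.iterate_succ_apply]
      exact hg (hmaps x hx) (hmaps y hy) (hf (hpiece hx) (hpiece hy) hxy)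
    · right; intro x hx y hy hxy
      simp only [Function.iterate_succ_apply]
      exact hg (hmaps y hy) (hmaps x hx) (hf (hpiece hx) (hpiece hy) hxy)
    · left; intro x hx y hy hxy
      simp only [Function.iterate_succ_apply]
      exact hg (hmaps y hy) (hmaps x hx) (hf (hpiece hx) (hpiece hy) hxy)

lemma image_f_cyl (w : ℕ → ι) (k : ℕ) (hk : 1 ≤ k) :
    S.f '' (S.cyl w (k+1)) = S.cyl (fun j => w (j+1)) k := by
  apply Set.Subset.antisymm
  · rintro y ⟨x, hx, rfl⟩
    exact (mem_cyl_succ S |>.mp hx).2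
  · intro y hy
    have hy01 : y ∈ Set.Ico (0:ℝ) 1 :=
      S.hsub _ (cyl_subset_piece S _ k hk hy)
    rw [← S.honto (w 0)] at hy01
    obtain ⟨x, hx, rfl⟩ := hy01
    exact ⟨x, (mem_cyl_succ S).mpr ⟨hx, hy⟩, rfl⟩

lemma iter_image_cyl : ∀ (k : ℕ), 1 ≤ k → ∀ (w : ℕ → ι),
    S.f^[k] '' (S.cyl w k) = Set.Ico (0:ℝ) 1 := by
  intro k
  induction k with
  | zero => omega
  | succ k ih =>
    intro _ w
    rcases Nat.eq_zero_or_pos k with rfl | hk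
    · rw [cyl_one]
      simpa using S.honto (w 0)
    · have hc : S.f^[k+1] = S.f^[k] ∘ S.f := Function.iterate_succ S.f k
      rw [hc, Set.image_comp, image_f_cyl S w k hk, ih hk]

end SchmidtAux
namespace SchmidtAux

open Set

/-- Pointwise continuity (with explicit modulus) of a strictly monotone surjection
onto `[0,1)`. -/
lemma key_cont {C : Set ℝ} {F : ℝ → ℝ}
    (hm : StrictMonoOn F C ∨ StrictAntiOn F C)
    (him : F '' C = Set.Ico 0 1)
    {x : ℝ} (hx : x ∈ C) {ε : ℝ} (hε : 0 < ε) :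
    ∃ δ > 0, ∀ z ∈ C, |z - x| < δ → |F z - F x| < ε := by
  have hmemF : ∀ z ∈ C, F z ∈ Set.Ico (0:ℝ) 1 := by
    intro z hz; rw [← him]; exact Set.mem_image_of_mem F hz
  have hu := hmemF x hx
  set u := F x with hudef
  have h0 : 0 ≤ u := hu.1
  have h1' : u < 1 := hu.2
  -- a value slightly above u
  set v : ℝ := (u + min (u + ε) 1) / 2 with hv
  have hv0 : 0 ≤ v := by
    have : 0 ≤ min (u + ε) 1 := le_min (by linarith) (by norm_num)
    simp only [hv]; linarith
  have huv : u < v := by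
    have : u < min (u + ε) 1 := lt_min (by linarith) h1'
    simp only [hv]; linarith
  have hv1 : v < 1 := by
    have : min (u + ε) 1 ≤ 1 := min_le_right _ _
    simp only [hv]; linarith
  have hvε : v < u + ε := by
    have : min (u + ε) 1 ≤ u + ε := min_le_left _ _
    simp only [hv]; linarith
  obtain ⟨yp, hypC, hyp⟩ : ∃ y ∈ C, F y = v := by
    have : v ∈ Set.Ico (0:ℝ) 1 := ⟨hv0, hv1⟩
    rw [← him] at this
    exact this
  rcases hm with hmono | hanti
  · -- monotone case
    have hxyp : x < yp := by
      rcases lt_trichotomy x yp with h | h | h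
      · exact h
      · exfalso; rw [h, hyp] at hudef; linarith
      · exfalso; have := hmono hypC hx h; rw [hyp] at this; linarith
    by_cases hcase : u < ε
    · refine ⟨yp - x, by linarith, ?_⟩
      intro z hz hzd
      obtain ⟨hd1, hd2⟩ := abs_lt.mp hzd
      have hzy : z < yp := by linarith
      rcases lt_trichotomy z x with h | h | h
      · have hlt : F z < u := hmono hz hx h
        have h0' : 0 ≤ F z := (hmemF z hz).1
        rw [abs_lt]; constructor <;> linarith
      · rw [h]; simpa [hudef] using hε
      · have hgt : u < F z := hmono hx hz h
        have hlt : F z < v := by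
          have := hmono hz hypC hzy
          rwa [hyp] at this
        rw [abs_lt]; constructor <;> linarith
    · push_neg at hcase
      have hwmem : u - ε/2 ∈ Set.Ico (0:ℝ) 1 := ⟨by linarith, by linarith⟩
      rw [← him] at hwmem
      obtain ⟨ym, hymC, hym⟩ := hwmem
      have hymx : ym < x := by
        rcases lt_trichotomy ym x with h | h | h
        · exact h
        · exfalso; rw [← h, hym] at hudef; linarith
        · exfalso; have := hmono hx hymC h; rw [hym] at this; linarith
      refine ⟨min (yp - x) (x - ym), lt_min (by linarith) (by linarith), ?_⟩
      intro z hz hzd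
      obtain ⟨hd1, hd2⟩ := abs_lt.mp hzd
      have hm1 : min (yp - x) (x - ym) ≤ yp - x := min_le_left _ _
      have hm2 : min (yp - x) (x - ym) ≤ x - ym := min_le_right _ _
      have hzy : z < yp := by linarith
      have hzym : ym < z := by linarith
      rcases lt_trichotomy z x with h | h | h
      · have hlt : F z < u := hmono hz hx h
        have hgt : u - ε/2 < F z := by
          have := hmono hymC hz hzym
          rwa [hym] at this
        rw [abs_lt]; constructor <;> linarith
      · rw [h]; simpa [hudef] using hε
      · have hgt : u < F z := hmono hx hz h
        have hlt : F z < v := by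
          have := hmono hz hypC hzy
          rwa [hyp] at this
        rw [abs_lt]; constructor <;> linarith
  · -- antitone case
    have hxyp : yp < x := by
      rcases lt_trichotomy yp x with h | h | h
      · exact h
      · exfalso; rw [← h, hyp] at hudef; linarith
      · exfalso; have := hanti hx hypC h; rw [hyp] at this; linarith
    by_cases hcase : u < ε
    · refine ⟨x - yp, by linarith, ?_⟩
      intro z hz hzd
      obtain ⟨hd1, hd2⟩ := abs_lt.mp hzd
      have hzy : yp < z := by linarith
      rcases lt_trichotomy z x with h | h | h
      · have hgt : u < F z := hanti hz hx h
        have hlt : F z < v := by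
          have := hanti hypC hz hzy
          rwa [hyp] at this
        rw [abs_lt]; constructor <;> linarith
      · rw [h]; simpa [hudef] using hε
      · have hlt : F z < u := hanti hx hz h
        have h0' : 0 ≤ F z := (hmemF z hz).1
        rw [abs_lt]; constructor <;> linarith
    · push_neg at hcase
      have hwmem : u - ε/2 ∈ Set.Ico (0:ℝ) 1 := ⟨by linarith, by linarith⟩
      rw [← him] at hwmem
      obtain ⟨ym, hymC, hym⟩ := hwmem
      have hymx : x < ym := by
        rcases lt_trichotomy x ym with h | h | h
        · exact h
        · exfalso; rw [h, hym] at hudef; linarith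
        · exfalso; have := hanti hymC hx h; rw [hym] at this; linarith
      refine ⟨min (x - yp) (ym - x), lt_min (by linarith) (by linarith), ?_⟩
      intro z hz hzd
      obtain ⟨hd1, hd2⟩ := abs_lt.mp hzd
      have hm1 : min (x - yp) (ym - x) ≤ x - yp := min_le_left _ _
      have hm2 : min (x - yp) (ym - x) ≤ ym - x := min_le_right _ _
      have hzy : yp < z := by linarith
      have hzym : z < ym := by linarith
      rcases lt_trichotomy z x with h | h | h
      · have hgt : u < F z := hanti hz hx h
        have hlt : F z < v := by
          have := hanti hypC hz hzy
          rwa [hyp] at this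
        rw [abs_lt]; constructor <;> linarith
      · rw [h]; simpa [hudef] using hε
      · have hlt : F z < u := hanti hx hz h
        have hgt : u - ε/2 < F z := by
          have := hanti hz hymC hzym
          rwa [hym] at this
        rw [abs_lt]; constructor <;> linarith

/-- Transport of accumulation points through the inverse of an expanding coding map. -/
lemma accSet_transport {C : Set ℝ} {F : ℝ → ℝ}
    (hm : StrictMonoOn F C ∨ StrictAntiOn F C)
    (him : F '' C = Set.Ico 0 1)
    (hoc : C.OrdConnected) (hC01 : C ⊆ Set.Icc 0 1) (T : Set ℝ) :
    AccSet {z ∈ C | F z ∈ T} ⊆ {z ∈ C | F z ∈ AccSet T} ∪ {sInf C, sSup C} := by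
  intro x hx
  have hCne : C.Nonempty := by
    have h0 : (0:ℝ) ∈ Set.Ico (0:ℝ) 1 := ⟨le_rfl, one_pos⟩
    rw [← him] at h0
    obtain ⟨z, hz, _⟩ := h0
    exact ⟨z, hz⟩
  have hbddA : BddAbove C := ⟨1, fun z hz => (hC01 hz).2⟩
  have hbddB : BddBelow C := ⟨0, fun z hz => (hC01 hz).1⟩
  have hsubIcc : {z ∈ C | F z ∈ T} ⊆ Set.Icc (sInf C) (sSup C) := fun z hz =>
    ⟨csInf_le hbddB hz.1, le_csSup hbddA hz.1⟩
  have hxmem : x ∈ Set.Icc (sInf C) (sSup C) := by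
    have h1 : x ∈ closure {z ∈ C | F z ∈ T} := derivedSet_subset_closure _ hx
    exact closure_minimal hsubIcc isClosed_Icc h1
  by_cases hxe : x = sInf C ∨ x = sSup C
  · right
    rcases hxe with h | h
    · exact Or.inl h
    · exact Or.inr h
  push_neg at hxe
  have hxi : sInf C < x := lt_of_le_of_ne hxmem.1 (Ne.symm hxe.1)
  have hxs : x < sSup C := lt_of_le_of_ne hxmem.2 hxe.2
  have hxC : x ∈ C := by
    obtain ⟨z1, hz1C, hz1⟩ : ∃ z ∈ C, z < x := by
      by_contra h
      push_neg at h
      exact absurd (le_csInf hCne h) (not_le.mpr hxi)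
    obtain ⟨z2, hz2C, hz2⟩ : ∃ z ∈ C, x < z := by
      by_contra h
      push_neg at h
      exact absurd (csSup_le hCne h) (not_le.mpr hxs)
    exact hoc.out hz1C hz2C ⟨le_of_lt hz1, le_of_lt hz2⟩
  left
  refine ⟨hxC, ?_⟩
  rw [AccSet, Set.mem_setOf_eq, accPt_iff_nhds]
  intro U hU
  obtain ⟨ε, hε, hball⟩ := Metric.mem_nhds_iff.mp hU
  obtain ⟨δ, hδ, hcont⟩ := key_cont hm him hxC hε
  rw [AccSet, Set.mem_setOf_eq, accPt_iff_nhds] at hx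
  obtain ⟨y, ⟨hyb, hyS⟩, hyx⟩ := hx (Metric.ball x δ) (Metric.ball_mem_nhds x hδ)
  have hFy : |F y - F x| < ε := hcont y hyS.1 (by
    rw [Metric.mem_ball, Real.dist_eq] at hyb; exact hyb)
  have hinj : F y ≠ F x := by
    intro h
    rcases hm with hmono | hanti
    · exact hyx (hmono.injOn hyS.1 hxC h)
    · exact hyx (hanti.injOn hyS.1 hxC h)
  exact ⟨F y, ⟨hball (by rw [Metric.mem_ball, Real.dist_eq]; exact hFy), hyS.2⟩, hinj⟩

lemma accSet_iterate_empty (m : ℕ) : AccSet^[m] (∅ : Set ℝ) = ∅ := by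
  induction m with
  | zero => simp
  | succ m ihm => rw [Function.iterate_succ_apply, accSet_finite finite_empty]; exact ihm

lemma bad_iterate {C : Set ℝ} {F : ℝ → ℝ}
    (hm : StrictMonoOn F C ∨ StrictAntiOn F C)
    (him : F '' C = Set.Ico 0 1)
    (hoc : C.OrdConnected) (hC01 : C ⊆ Set.Icc 0 1) (T : Set ℝ) (m : ℕ) :
    AccSet^[m] {z ∈ C | F z ∈ T} ⊆
      {z ∈ C | F z ∈ AccSet^[m] T} ∪ {sInf C, sSup C} := by
  induction m generalizing T with
  | zero => simp only [Function.iterate_zero, id]; exact Set.subset_union_left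
  | succ m ih =>
    rw [Function.iterate_succ_apply, Function.iterate_succ_apply]
    refine (accSet_iterate_mono (accSet_transport hm him hoc hC01 T) m).trans ?_
    refine (accSet_iterate_union _ _ m).trans ?_
    refine Set.union_subset (ih (AccSet T)) ?_
    have hfin : AccSet^[m] ({sInf C, sSup C} : Set ℝ) ⊆ {sInf C, sSup C} := by
      cases m with
      | zero => simp
      | succ m =>
        rw [Function.iterate_succ_apply]
        have : AccSet ({sInf C, sSup C} : Set ℝ) = ∅ :=
          accSet_finite (Set.Finite.insert _ (Set.finite_singleton _))
        rw [this, accSet_iterate_empty m]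
        exact Set.empty_subset _
    exact hfin.trans Set.subset_union_right

end SchmidtAux
namespace SchmidtAux

open Set

set_option linter.unusedSectionVars false

variable {ι : Type} [Countable ι] (S : ExpandingSystem ι)

lemma piece_unique {u : ℝ} {i j : ι} (hi : u ∈ Set.Ioo (S.a i) (S.b i))
    (hj : u ∈ Set.Ioo (S.a j) (S.b j)) : i = j := by
  by_contra hne
  exact Set.disjoint_left.mp (S.hdisj hne) (Set.Ioo_subset_Ico_self hi)
    (Set.Ioo_subset_Ico_self hj)

lemma exists_sep {i i' : ι} {u v : ℝ} (hu : u ∈ Set.Ioo (S.a i) (S.b i))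
    (hv : v ∈ Set.Ioo (S.a i') (S.b i')) (huv : u < v) (hne : i ≠ i') :
    S.b i ∈ Set.Ico (0:ℝ) 1 ∧ u < S.b i ∧ S.b i < v := by
  have hle : S.b i ≤ S.a i' := by
    by_contra h
    push_neg at h
    have hm1 : max (S.a i) (S.a i') ∈ Set.Ico (S.a i) (S.b i) :=
      ⟨le_max_left _ _, max_lt (S.hab i) h⟩
    have hm2 : max (S.a i) (S.a i') ∈ Set.Ico (S.a i') (S.b i') := by
      refine ⟨le_max_right _ _, max_lt ?_ (S.hab i')⟩
      linarith [hu.1, hu.2, hv.2]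
    exact Set.disjoint_left.mp (S.hdisj hne) hm1 hm2
  refine ⟨⟨?_, ?_⟩, hu.2, lt_of_le_of_lt hle hv.1⟩
  · linarith [a_nonneg S i, S.hab i]
  · have := (S.hsub i' ⟨le_rfl, S.hab i'⟩).2
    linarith [hv.1]

/-- All points of an order-connected set avoiding the bad set are coded by a single piece. -/
lemma same_piece_on_interval {C : Set ℝ} {F : ℝ → ℝ}
    (hm : StrictMonoOn F C ∨ StrictAntiOn F C)
    (hsurj : ∀ e ∈ Set.Ico (0:ℝ) 1, ∃ z ∈ C, F z = e)
    {X : Set ℝ} (hXoc : X.OrdConnected) (hXC : X ⊆ C)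
    (hXD : ∀ z ∈ X, F z ∉ D1 S)
    {x y : ℝ} (hx : x ∈ X) (hy : y ∈ X)
    {i j : ι} (hFx : F x ∈ Set.Ioo (S.a i) (S.b i))
    (hFy : F y ∈ Set.Ioo (S.a j) (S.b j)) : i = j := by
  have key : ∀ {p q : ℝ}, p ∈ X → q ∈ X → ∀ {e : ℝ}, e ∈ Set.Ico (0:ℝ) 1 → e ∈ D1 S →
      F p < e → e < F q → False := by
    intro p q hp hq e he heD hpe heq
    obtain ⟨z, hzC, hze⟩ := hsurj e he
    have hzD : F z ∈ D1 S := by rw [hze]; exact heD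
    rcases hm with hmono | hanti
    · have hpz : p < z := by
        rcases lt_trichotomy p z with h' | h' | h'
        · exact h'
        · exfalso; have : F p = e := by rw [h']; exact hze
          linarith
        · exfalso; have := hmono hzC (hXC hp) h'; rw [hze] at this; linarith
      have hzq : z < q := by
        rcases lt_trichotomy z q with h' | h' | h'
        · exact h'
        · exfalso; have : F q = e := by rw [← h']; exact hze
          linarith
        · exfalso; have := hmono (hXC hq) hzC h'; rw [hze] at this; linarith
      exact hXD z (hXoc.out hp hq ⟨le_of_lt hpz, le_of_lt hzq⟩) hzD
    · have hqz : q < z := by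
        rcases lt_trichotomy q z with h' | h' | h'
        · exact h'
        · exfalso; have : F q = e := by rw [h']; exact hze
          linarith
        · exfalso; have := hanti hzC (hXC hq) h'; rw [hze] at this; linarith
      have hzp : z < p := by
        rcases lt_trichotomy z p with h' | h' | h'
        · exact h'
        · exfalso; have : F p = e := by rw [← h']; exact hze
          linarith
        · exfalso; have := hanti (hXC hp) hzC h'; rw [hze] at this; linarith
      exact hXD z (hXoc.out hq hp ⟨le_of_lt hqz, le_of_lt hzp⟩) hzD
  by_contra hne
  rcases lt_trichotomy (F x) (F y) with h | h | h
  · obtain ⟨h01, h1, h2⟩ := exists_sep S hFx hFy h hne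
    exact key hx hy h01 (b_mem_D1 S i) h1 h2
  · exact hne (piece_unique S (h ▸ hFx) hFy)
  · obtain ⟨h01, h1, h2⟩ := exists_sep S hFy hFx h (Ne.symm hne)
    exact key hy hx h01 (b_mem_D1 S j) h1 h2

end SchmidtAux
namespace SchmidtAux

open Set

set_option linter.unusedSectionVars false

variable {ι : Type} [Countable ι] (S : ExpandingSystem ι) {α β : ℝ}

lemma mem_self (X : SInt) : X.c ∈ X.set := by
  simp only [SInt.set, Set.mem_Icc]
  constructor <;> linarith [X.rpos]

lemma SInt_ordConnected (X : SInt) : X.set.OrdConnected := by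
  have : X.set = Set.Icc (X.c - X.r) (X.c + X.r) := rfl
  rw [this]
  exact Set.ordConnected_Icc

/-- Step from generation `0` to generation `1`. -/
lemma step0 {n : ℕ} (hn : 1 ≤ n) (hacc : AccSet^[n] (Ept S) = ∅)
    (hα0 : 0 < α) (hα : α ≤ 1/2) (J : SInt) (hJ : J.set ⊆ Set.Icc 0 1) :
    Reaches α β J (fun s => ∃ w : ℕ → ι, s ⊆ S.cyl w 1) := by
  refine (reaches_avoidRank hα0 hα n (D1 S) (D1_rank S hn hacc) J).mono ?_
  intro X hXJ hXD
  have hpiece : ∀ z ∈ X.set, ∃ i, z ∈ Set.Ioo (S.a i) (S.b i) := by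
    intro z hz
    have hz01 : z ∈ Set.Icc (0:ℝ) 1 := hJ (hXJ hz)
    have hzD : z ∉ D1 S := by
      intro h
      have : z ∈ X.set ∩ D1 S := ⟨hz, h⟩
      rw [hXD] at this
      exact this
    have : z ∈ ⋃ i, Set.Ioo (S.a i) (S.b i) := by
      by_contra h
      exact hzD ⟨hz01, h⟩
    exact Set.mem_iUnion.mp this
  obtain ⟨i₀, hi₀⟩ := hpiece X.c (mem_self X)
  refine ⟨fun _ => i₀, ?_⟩
  intro y hy
  obtain ⟨i₁, hi₁⟩ := hpiece y hy
  have hXD' : ∀ z ∈ X.set, id z ∉ D1 S := by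
    intro z hz h
    have : z ∈ X.set ∩ D1 S := ⟨hz, h⟩
    rw [hXD] at this
    exact this
  have heq : i₁ = i₀ := by
    refine same_piece_on_interval S (C := Set.Icc 0 1) (F := id)
      (Or.inl fun p _ q _ h => h) ?_ (SInt_ordConnected X)
      (fun z hz => hJ (hXJ hz)) hXD' hy (mem_self X) hi₁ hi₀
    intro e he
    exact ⟨e, Set.Ico_subset_Icc_self he, rfl⟩
  rw [cyl_one]
  subst heq
  exact ⟨le_of_lt hi₁.1, hi₁.2⟩

/-- Step from generation `k ≥ 1` to generation `k+1`. -/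
lemma stepk {n : ℕ} (hn : 1 ≤ n) (hacc : AccSet^[n] (Ept S) = ∅)
    (hα0 : 0 < α) (hα : α ≤ 1/2) (k : ℕ) (hk : 1 ≤ k) (w : ℕ → ι) (J : SInt)
    (hJc : J.set ⊆ S.cyl w k) (hJ01 : J.set ⊆ Set.Icc 0 1) :
    Reaches α β J (fun s => ∃ w' : ℕ → ι, s ⊆ S.cyl w' (k+1)) := by
  set C := S.cyl w k with hC
  set F := S.f^[k] with hF
  have hm := iter_monoanti S k w
  have him := iter_image_cyl S k hk w
  have hoc := cyl_ordConnected S k w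
  have hC01 : C ⊆ Set.Icc 0 1 := by
    refine (cyl_subset_piece S w k hk).trans ?_
    exact (S.hsub _).trans Set.Ico_subset_Icc_self
  set Bad := {z ∈ C | F z ∈ D1 S} with hBad
  have hrank : AccSet^[n+1] Bad = ∅ := by
    rw [Function.iterate_succ_apply']
    have h1 := bad_iterate hm him hoc hC01 (D1 S) n
    rw [D1_rank S hn hacc] at h1
    have h2 : {z ∈ C | F z ∈ (∅ : Set ℝ)} = ∅ := by ext z; simp
    rw [h2, Set.empty_union] at h1
    have h3 := accSet_mono h1
    rw [accSet_finite (Set.Finite.insert _ (Set.finite_singleton _))] at h3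
    exact Set.subset_empty_iff.mp h3
  refine (reaches_avoidRank hα0 hα (n+1) Bad hrank J).mono ?_
  intro X hXJ hXB
  have hXC : X.set ⊆ C := hXJ.trans hJc
  have hXD : ∀ z ∈ X.set, F z ∉ D1 S := by
    intro z hz h
    have : z ∈ X.set ∩ Bad := ⟨hz, hXC hz, h⟩
    rw [hXB] at this
    exact this
  have hsurj : ∀ e ∈ Set.Ico (0:ℝ) 1, ∃ z ∈ C, F z = e := by
    intro e he
    rw [← him] at he
    obtain ⟨z, hz, hze⟩ := he
    exact ⟨z, hz, hze⟩
  have hpiece : ∀ z ∈ X.set, ∃ i, F z ∈ Set.Ioo (S.a i) (S.b i) := by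
    intro z hz
    have hz01 : F z ∈ Set.Ico (0:ℝ) 1 := by
      rw [← him]
      exact Set.mem_image_of_mem F (hXC hz)
    have : F z ∈ ⋃ i, Set.Ioo (S.a i) (S.b i) := by
      by_contra h
      exact hXD z hz ⟨Set.Ico_subset_Icc_self hz01, h⟩
    exact Set.mem_iUnion.mp this
  obtain ⟨i₀, hi₀⟩ := hpiece X.c (mem_self X)
  refine ⟨fun j => if j < k then w j else i₀, ?_⟩
  intro y hy
  have hyC : y ∈ C := hXC hy
  intro j hj
  by_cases hjk : j < k
  · simp only [if_pos hjk]
    exact hyC j hjk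
  · have hjeq : j = k := by omega
    subst hjeq
    simp only [if_neg hjk]
    obtain ⟨i₁, hi₁⟩ := hpiece y hy
    have heq : i₁ = i₀ :=
      same_piece_on_interval S hm hsurj (SInt_ordConnected X) hXC hXD hy (mem_self X) hi₁ hi₀
    subst heq
    exact ⟨le_of_lt hi₁.1, hi₁.2⟩

lemma nonempty_iota (S' : ExpandingSystem ι) : Nonempty ι := by
  by_contra h
  rw [not_nonempty_iff] at h
  have h2 := S'.hsum
  rw [tsum_empty] at h2
  norm_num at h2

/-- The main induction over generations. -/
lemma main {n : ℕ} (hn : 1 ≤ n) (hacc : AccSet^[n] (Ept S) = ∅)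
    (hα0 : 0 < α) (hα : α ≤ 1/2) :
    ∀ (k : ℕ) (I : SInt), I.set ⊆ Set.Icc 0 1 →
      Reaches α β I (fun s => ∃ w : ℕ → ι, s ⊆ S.cyl w k) := by
  have hα1 : α ≤ 1 := by linarith
  haveI := nonempty_iota S
  intro k
  induction k with
  | zero =>
    intro I hI
    refine reaches_of_forall hα0 hα1 (fun X _ => ⟨fun _ => Classical.arbitrary ι, ?_⟩)
    rw [cyl_zero]
    exact Set.subset_univ _
  | succ k ih =>
    intro I hI
    refine Reaches.comp hα0 hα1 (ih I hI) ?_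
    rintro J hJI ⟨X, ⟨w, hXw⟩, hJX⟩
    have hJ01 : J.set ⊆ Set.Icc 0 1 := hJI.trans hI
    rcases Nat.eq_zero_or_pos k with rfl | hk
    · exact step0 S hn hacc hα0 hα J hJ01
    · exact stepk S hn hacc hα0 hα k hk w J (hJX.trans hXw) hJ01

end SchmidtAux

/-- If the set `E(f)` of endpoints of generation-1 cylinders satisfies `Acc^n(E(f)) = ∅`
for some `n`, then condition (i) holds with any `α ≤ 1/2`: for any `β ∈ (0,1)`, any
generation `k` and any starting interval `I ⊆ [0,1]`, White can in finitely many moves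
place his interval inside a single generation-`k` cylinder. -/
theorem acc_empty_implies_condI {ι : Type} [Countable ι] (S : ExpandingSystem ι)
    (n : ℕ) (hn : 1 ≤ n)
    (hacc : AccSet^[n] (Set.range S.a ∪ Set.range S.b) = ∅) :
    ∀ α β : ℝ, 0 < α → α ≤ 1/2 → 0 < β → β < 1 →
      ∀ (k : ℕ) (I : SInt), I.set ⊆ Set.Icc (0:ℝ) 1 →
        WhiteCanReach α β I fun s => ∃ w : ℕ → ι, s ⊆ S.cyl w k := by
  intro α β hα0 hα hβ0 hβ1 k I hI
  exact (SchmidtAux.main S hn hacc hα0 hα k I hI).whiteCanReach
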